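/- A social choice function f is WNOM-implementable if and only if for each agent i there exists a worst-case labelling ω such that the graph G^ω_{i,f} contains no negative-weight cycles. -/

import Mathlib

/-- A cycle of length `n` in a directed, annotated multigraph with edge relation `E`:
the node sequence is `c k`, and there is an edge annotated `(c k).2`
from `(c k).1` to `(c (k+1 mod n)).1` for every `k`. -/
def IsCycle {P T : Type*} {n : ℕ} (E : P → P → T → Prop) (c : Fin n → P × T) : Prop :=
  ∀ k : Fin n, E (c k).1 (c (finRotate n k)).1 (c k).2

/-- The total weight of a cycle, where the edge from `x` to `y` annotated `t`
has weight `w x y t`. -/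
def cycleWeight {P T : Type*} {n : ℕ} (w : P → P → T → ℝ) (c : Fin n → P × T) : ℝ :=
  ∑ k : Fin n, w (c k).1 (c (finRotate n k)).1 (c k).2

/-- The graph has a negative-weight cycle (of some positive length). -/
def HasNegCycle {P T : Type*} (E : P → P → T → Prop) (w : P → P → T → ℝ) : Prop :=
  ∃ (n : ℕ) (c : Fin (n + 1) → P × T), IsCycle E c ∧ cycleWeight w c < 0

/-- Edges of the graph `G^ω_{i,f}` for a worst-case labelling `ω` of agent `i`.
The labelling entry `ω t k` (true type `t`, bid `k`) is recorded as a full profile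
whose `i`-th coordinate is irrelevant (it is overwritten by the bid `k`).
An edge from `x` to `y` annotated `t` is either a labelling edge,
from any node `(k, x₋ᵢ)` to `(k, ω_{t k})`, or an incentive-compatibility edge,
from `(t, ω_{t t})` to `(k, ω_{t k})`. -/
def edgeW {I : Type*} [DecidableEq I] {T : I → Type*} (i : I)
    (ω : T i → T i → (∀ j, T j)) (x y : ∀ j, T j) (t : T i) : Prop :=
  (∃ k : T i, x i = k ∧ y = Function.update (ω t k) i k) ∨
  (∃ k : T i, x = Function.update (ω t t) i t ∧ y = Function.update (ω t k) i k)

section BellmanFord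

variable {P T : Type*} [Fintype P] [Fintype T]

open Classical in
noncomputable def dBF (E : P → P → T → Prop) (w : P → P → T → ℝ) : ℕ → P → ℝ
  | 0, _ => 0
  | n + 1, y =>
      (Finset.univ.filter fun xt : P × T => E xt.1 y xt.2).fold min (dBF E w n y)
        fun xt => dBF E w n xt.1 + w xt.1 y xt.2

variable (E : P → P → T → Prop) (w : P → P → T → ℝ)

lemma dBF_succ_le (n : ℕ) (y : P) : dBF E w (n + 1) y ≤ dBF E w n y := by
  rw [dBF]
  exact (Finset.fold_min_le _).2 (Or.inl le_rfl)

lemma dBF_le_edge {x y : P} {t : T} (n : ℕ) (h : E x y t) :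
    dBF E w (n + 1) y ≤ dBF E w n x + w x y t := by
  rw [dBF]
  exact (Finset.fold_min_le _).2 (Or.inr ⟨(x, t), by simp [h], le_rfl⟩)

lemma dBF_succ_cases (n : ℕ) (y : P) :
    dBF E w (n + 1) y = dBF E w n y ∨
      ∃ x t, E x y t ∧ dBF E w (n + 1) y = dBF E w n x + w x y t := by
  have h : dBF E w (n + 1) y ≤ dBF E w (n + 1) y := le_rfl
  conv_lhs at h => rw [dBF]
  rcases (Finset.fold_min_le _).1 h with h' | ⟨⟨x, t⟩, hmem, h'⟩
  · exact Or.inl (le_antisymm (dBF_succ_le E w n y) h')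
  · simp only [Finset.mem_filter] at hmem
    exact Or.inr ⟨x, t, hmem.2, le_antisymm (dBF_le_edge E w n hmem.2) h'⟩

lemma dBF_le_of_le {m n : ℕ} (h : m ≤ n) (y : P) : dBF E w n y ≤ dBF E w m y := by
  induction n, h using Nat.le_induction with
  | base => exact le_rfl
  | succ n hmn ih => exact (dBF_succ_le E w n y).trans ih

lemma dBF_le_walk (ℓ : ℕ) (v : ℕ → P) (a : ℕ → T)
    (hE : ∀ k < ℓ, E (v k) (v (k + 1)) (a k)) :
    dBF E w ℓ (v ℓ) ≤ ∑ k ∈ Finset.range ℓ, w (v k) (v (k + 1)) (a k) := by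
  induction ℓ with
  | zero => simp [dBF]
  | succ ℓ ih =>
    rw [Finset.sum_range_succ]
    exact (dBF_le_edge E w ℓ (hE ℓ (Nat.lt_succ_self ℓ))).trans
      (add_le_add (ih fun k hk => hE k (hk.trans (Nat.lt_succ_self ℓ))) le_rfl)

lemma dBF_exists_walk [Nonempty T] (n : ℕ) (y : P) :
    ∃ ℓ ≤ n, ∃ v : ℕ → P, ∃ a : ℕ → T, v ℓ = y ∧
      (∀ k < ℓ, E (v k) (v (k + 1)) (a k)) ∧
      ∑ k ∈ Finset.range ℓ, w (v k) (v (k + 1)) (a k) = dBF E w n y := by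
  induction n generalizing y with
  | zero =>
    exact ⟨0, le_rfl, fun _ => y, fun _ => Classical.arbitrary T, rfl,
      by omega, by simp [dBF]⟩
  | succ n ih =>
    rcases dBF_succ_cases E w n y with h | ⟨x, t, ht, h⟩
    · obtain ⟨ℓ, hℓ, v, a, hv, hEd, hsum⟩ := ih y
      exact ⟨ℓ, hℓ.trans n.le_succ, v, a, hv, hEd, by rw [hsum, ← h]⟩
    · obtain ⟨ℓ, hℓ, v, a, hv, hEd, hsum⟩ := ih x
      refine ⟨ℓ + 1, Nat.succ_le_succ hℓ, fun k => if k ≤ ℓ then v k else y,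
        fun k => if k < ℓ then a k else t, by simp, ?_, ?_⟩
      · intro k hk
        rcases Nat.lt_succ_iff_lt_or_eq.1 hk with hk | rfl
        · simp only [if_pos hk.le, if_pos (Nat.succ_le_of_lt hk), if_pos hk]
          exact hEd k hk
        · simp only [le_refl, if_pos, if_neg (by omega : ¬ k + 1 ≤ k), if_neg (lt_irrefl k)]
          rw [hv]; exact ht
      · rw [Finset.sum_range_succ]
        simp only [le_refl, if_pos, if_neg (by omega : ¬ ℓ + 1 ≤ ℓ), if_neg (lt_irrefl ℓ)]
        rw [hv, h]
        congr 1
        rw [← hsum]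
        refine Finset.sum_congr rfl fun k hk => ?_
        have hk := Finset.mem_range.1 hk
        rw [if_pos hk.le, if_pos (Nat.succ_le_of_lt hk), if_pos hk]

lemma dBF_card_stab [Nonempty T] (hneg : ¬ HasNegCycle E w) (y : P) :
    dBF E w (Fintype.card P) y ≤ dBF E w (Fintype.card P + 1) y := by
  set N := Fintype.card P with hN
  obtain ⟨ℓ, hℓ, v, a, hv, hEd, hsum⟩ := dBF_exists_walk E w (N + 1) y
  rcases Nat.lt_succ_iff_lt_or_eq.1 (Nat.lt_succ_of_le hℓ) with hlt | rfl
  · calc dBF E w N y ≤ dBF E w ℓ y := dBF_le_of_le E w (Nat.lt_succ_iff.1 hlt) y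
      _ ≤ _ := hv ▸ dBF_le_walk E w ℓ v a hEd
      _ = _ := hsum
  · -- ℓ = N + 1 : pigeonhole, extract a cycle, splice it out
    obtain ⟨j, j', hjj, hj'le, hveq⟩ :
        ∃ j j', j < j' ∧ j' ≤ N + 1 ∧ v j = v j' := by
      obtain ⟨j₀, j₁, hne, hvv⟩ :=
        Fintype.exists_ne_map_eq_of_card_lt (fun k : Fin (N + 2) => v k.val)
          (by simp only [Fintype.card_fin]; omega)
      rcases hne.lt_or_gt with hlt | hlt
      · exact ⟨j₀, j₁, hlt, by omega, hvv⟩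
      · exact ⟨j₁, j₀, hlt, by omega, hvv.symm⟩
    obtain ⟨n₀, hm⟩ : ∃ n₀, j' - j = n₀ + 1 := ⟨j' - j - 1, by omega⟩
    set m := n₀ + 1 with hm'
    have hjm : j + m = j' := by omega
    -- the extracted cycle
    set c : Fin (n₀ + 1) → P × T := fun k => (v (j + k.val), a (j + k.val)) with hc
    have hkey : ∀ k : Fin (n₀ + 1), (c (finRotate (n₀ + 1) k)).1 = v (j + k.val + 1) := by
      intro k
      rcases eq_or_lt_of_le (Nat.lt_succ_iff.1 k.isLt) with hk | hk
      · have hkl : k = Fin.last n₀ := Fin.ext hk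
        rw [hkl, finRotate_last]
        show v (j + (0 : Fin (n₀ + 1)).val) = _
        have h1 : j + (Fin.last n₀).val + 1 = j' := by simp [Fin.val_last]; omega
        simp only [Fin.val_zero, Nat.add_zero, h1, hveq]
      · rw [finRotate_succ_apply]
        have h1 : ((k + 1 : Fin (n₀ + 1))).val = k.val + 1 :=
          Fin.val_add_one_of_lt (by simp [Fin.lt_def, hk])
        show v (j + ((k + 1 : Fin (n₀ + 1))).val) = _
        rw [h1, ← Nat.add_assoc]
    have hIsC : IsCycle E c := by
      intro k
      have hE' := hEd (j + k.val) (by have := k.isLt; omega)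
      show E (c k).1 (c (finRotate (n₀ + 1) k)).1 (c k).2
      rw [hkey k]
      exact hE'
    have hcw : cycleWeight w c
        = ∑ k ∈ Finset.range m, w (v (j + k)) (v (j + k + 1)) (a (j + k)) := by
      rw [cycleWeight, ← Fin.sum_univ_eq_sum_range fun k => w (v (j + k)) (v (j + k + 1)) (a (j + k))]
      exact Finset.sum_congr rfl fun k _ => by rw [hkey k]
    have hcyc : 0 ≤ ∑ k ∈ Finset.range m, w (v (j + k)) (v (j + k + 1)) (a (j + k)) := by
      by_contra hlt0
      exact hneg ⟨n₀, c, hIsC, by rw [hcw]; linarith⟩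
    -- spliced walk
    set ℓ' := N + 1 - m with hℓ'
    have hmle : m ≤ N + 1 := by omega
    have hjℓ' : j ≤ ℓ' := by omega
    set v'' : ℕ → P := fun k => if k < j then v k else v (k + m) with hv''
    set a'' : ℕ → T := fun k => if k < j then a k else a (k + m) with ha''
    have hv''le : ∀ k ≤ j, v'' k = v k := by
      intro k hk
      by_cases h : k < j
      · simp [hv'', h]
      · have hkj : k = j := by omega
        subst hkj
        show (if k < k then v k else v (k + m)) = v k
        rw [if_neg (lt_irrefl k), hjm, ← hveq]
    have hEd'' : ∀ k < ℓ', E (v'' k) (v'' (k + 1)) (a'' k) := by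
      intro k hk
      by_cases h : k < j
      · rw [hv''le k h.le, hv''le (k + 1) h]
        simp only [ha'', if_pos h]
        exact hEd k (by omega)
      · simp only [hv'', ha'', if_neg h, if_neg (by omega : ¬ k + 1 < j)]
        have h1 : k + 1 + m = k + m + 1 := by omega
        rw [h1]
        exact hEd (k + m) (by omega)
    have hend : v'' ℓ' = y := by
      simp only [hv'', if_neg (by omega : ¬ ℓ' < j)]
      have : ℓ' + m = N + 1 := by omega
      rw [this, hv]
    -- sum of spliced walk
    have hsum'' : ∑ k ∈ Finset.range ℓ', w (v'' k) (v'' (k + 1)) (a'' k)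
        = ∑ k ∈ Finset.range (N + 1), w (v k) (v (k + 1)) (a k)
          - ∑ k ∈ Finset.range m, w (v (j + k)) (v (j + k + 1)) (a (j + k)) := by
      have e1 : ∑ k ∈ Finset.range ℓ', w (v'' k) (v'' (k + 1)) (a'' k)
          = ∑ k ∈ Finset.range j, w (v k) (v (k + 1)) (a k)
            + ∑ k ∈ Finset.Ico j ℓ', w (v (k + m)) (v (k + m + 1)) (a (k + m)) := by
        rw [Finset.range_eq_Ico, ← Finset.sum_Ico_consecutive _ (Nat.zero_le j) hjℓ',
          ← Finset.range_eq_Ico]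
        congr 1
        · refine Finset.sum_congr rfl fun k hk => ?_
          have hk := Finset.mem_range.1 hk
          rw [hv''le k hk.le, hv''le (k + 1) hk]
          simp only [ha'', if_pos hk]
        · refine Finset.sum_congr rfl fun k hk => ?_
          have hk := Finset.mem_Ico.1 hk
          simp only [hv'', ha'', if_neg (by omega : ¬ k < j), if_neg (by omega : ¬ k + 1 < j)]
          have h1 : k + 1 + m = k + m + 1 := by omega
          rw [h1]
      have e2 : ∑ k ∈ Finset.Ico j ℓ', w (v (k + m)) (v (k + m + 1)) (a (k + m))
          = ∑ k ∈ Finset.Ico j' (N + 1), w (v k) (v (k + 1)) (a k) := by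
        rw [Finset.sum_Ico_eq_sum_range, Finset.sum_Ico_eq_sum_range]
        have h1 : ℓ' - j = N + 1 - j' := by omega
        rw [h1]
        refine Finset.sum_congr rfl fun k _ => ?_
        have h2 : j + k + m = j' + k := by omega
        rw [h2]
      have e3 : ∑ k ∈ Finset.range (N + 1), w (v k) (v (k + 1)) (a k)
          = ∑ k ∈ Finset.range j, w (v k) (v (k + 1)) (a k)
            + (∑ k ∈ Finset.Ico j j', w (v k) (v (k + 1)) (a k)
              + ∑ k ∈ Finset.Ico j' (N + 1), w (v k) (v (k + 1)) (a k)) := by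
        rw [Finset.sum_Ico_consecutive _ (by omega : j ≤ j') (by omega : j' ≤ N + 1),
          Finset.range_eq_Ico, ← Finset.sum_Ico_consecutive _ (Nat.zero_le j) (by omega : j ≤ N + 1),
          ← Finset.range_eq_Ico]
      have e4 : ∑ k ∈ Finset.Ico j j', w (v k) (v (k + 1)) (a k)
          = ∑ k ∈ Finset.range m, w (v (j + k)) (v (j + k + 1)) (a (j + k)) := by
        rw [Finset.sum_Ico_eq_sum_range]
        have h1 : j' - j = m := by omega
        try rw [h1]
      rw [e1, e2, e3, e4]
      ring
    calc dBF E w N y ≤ dBF E w ℓ' y := dBF_le_of_le E w (by omega) y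
      _ ≤ ∑ k ∈ Finset.range ℓ', w (v'' k) (v'' (k + 1)) (a'' k) :=
        hend ▸ dBF_le_walk E w ℓ' v'' a'' hEd''
      _ ≤ ∑ k ∈ Finset.range (N + 1), w (v k) (v (k + 1)) (a k) := by rw [hsum'']; linarith
      _ = dBF E w (N + 1) y := hsum

theorem exists_potential [Nonempty T] (hneg : ¬ HasNegCycle E w) :
    ∃ φ : P → ℝ, ∀ x y t, E x y t → φ y ≤ φ x + w x y t := by
  refine ⟨dBF E w (Fintype.card P), fun x y t h => ?_⟩
  calc dBF E w (Fintype.card P) y ≤ dBF E w (Fintype.card P + 1) y :=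
        dBF_card_stab E w hneg y
    _ ≤ dBF E w (Fintype.card P) x + w x y t := dBF_le_edge E w _ h

end BellmanFord

/-- A social choice function `f` is WNOM-implementable iff for each
agent `i` there is a worst-case labelling `ω` such that `G^ω_{i,f}` has no
negative-weight cycle, where edges have weight `w x y t = t(f x) - t(f y)`. -/
theorem wnom_implementable_iff_no_neg_cycle
    {I O : Type*} [DecidableEq I] [Fintype I] (T : I → Type*)
    [∀ i, Fintype (T i)] [∀ i, Nonempty (T i)]
    (val : ∀ i, T i → O → ℝ)
    (f : (∀ j, T j) → O) :
    (∃ p : (∀ j, T j) → I → ℝ, ∀ (i : I) (t b : T i),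
      (⨅ x : ∀ j, T j,
        (val i t (f (Function.update x i t)) + p (Function.update x i t) i)) ≥
      ⨅ x : ∀ j, T j,
        (val i t (f (Function.update x i b)) + p (Function.update x i b) i)) ↔
    (∀ i : I, ∃ ω : T i → T i → (∀ j, T j),
      ¬ HasNegCycle (edgeW i ω) (fun x y t => val i t (f x) - val i t (f y))) := by
  constructor
  · rintro ⟨p, hp⟩ i
    set g : T i → T i → (∀ j, T j) → ℝ :=
      fun t k x => val i t (f (Function.update x i k)) + p (Function.update x i k) i with hg
    have hmin : ∀ t k : T i, ∃ x₀, ∀ x, g t k x₀ ≤ g t k x := fun t k => Finite.exists_min _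
    choose ω hω using hmin
    have hinf : ∀ t k : T i, (⨅ x, g t k x) = g t k (ω t k) := fun t k =>
      le_antisymm (ciInf_le (Set.finite_range _).bddBelow _) (le_ciInf (hω t k))
    refine ⟨ω, ?_⟩
    rintro ⟨n, c, hC, hlt⟩
    have hedge : ∀ x y (t : T i), edgeW i ω x y t →
        val i t (f y) + p y i ≤ val i t (f x) + p x i := by
      rintro x y t (⟨k, hx, rfl⟩ | ⟨k, rfl, rfl⟩)
      · subst hx
        have h1 := hω t (x i) x
        rw [hg] at h1
        simp only at h1
        rwa [Function.update_eq_self] at h1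
      · calc val i t (f (Function.update (ω t k) i k)) + p (Function.update (ω t k) i k) i
            = g t k (ω t k) := rfl
          _ = ⨅ x, g t k x := (hinf t k).symm
          _ ≤ ⨅ x, g t t x := hp i t k
          _ = g t t (ω t t) := hinf t t
    have h1 : ∀ k : Fin (n + 1),
        p (c (finRotate (n + 1) k)).1 i - p (c k).1 i ≤
          val i (c k).2 (f (c k).1) - val i (c k).2 (f (c (finRotate (n + 1) k)).1) := by
      intro k
      have := hedge _ _ _ (hC k)
      linarith
    have h0 : (0 : ℝ) ≤ cycleWeight (fun x y t => val i t (f x) - val i t (f y)) c := by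
      calc (0 : ℝ) = ∑ k : Fin (n + 1),
            (p (c (finRotate (n + 1) k)).1 i - p (c k).1 i) := by
            rw [Finset.sum_sub_distrib,
              Equiv.sum_comp (finRotate (n + 1)) (fun k => p (c k).1 i), sub_self]
        _ ≤ _ := Finset.sum_le_sum fun k _ => h1 k
    exact absurd hlt (not_lt.2 h0)
  · intro h
    choose ω hω using h
    have hpot : ∀ i, ∃ φ : (∀ j, T j) → ℝ, ∀ x y t, edgeW i (ω i) x y t →
        φ y ≤ φ x + (val i t (f x) - val i t (f y)) := fun i =>
      exists_potential _ _ (hω i)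
    choose φ hφ using hpot
    refine ⟨fun x i => φ i x, fun i t b => ?_⟩
    have key : ∀ (t' k : T i) (x : ∀ j, T j),
        val i t' (f (Function.update (ω i t' k) i k)) + φ i (Function.update (ω i t' k) i k)
          ≤ val i t' (f (Function.update x i k)) + φ i (Function.update x i k) := by
      intro t' k x
      have he : edgeW i (ω i) (Function.update x i k) (Function.update (ω i t' k) i k) t' :=
        Or.inl ⟨k, Function.update_self i k x, rfl⟩
      have := hφ i _ _ _ he
      linarith
    have keyIC :
        val i t (f (Function.update (ω i t b) i b)) + φ i (Function.update (ω i t b) i b)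
          ≤ val i t (f (Function.update (ω i t t) i t)) + φ i (Function.update (ω i t t) i t) := by
      have he : edgeW i (ω i) (Function.update (ω i t t) i t)
          (Function.update (ω i t b) i b) t := Or.inr ⟨b, rfl, rfl⟩
      have := hφ i _ _ _ he
      linarith
    have hb : (⨅ x : ∀ j, T j,
          (val i t (f (Function.update x i b)) + φ i (Function.update x i b)))
        ≤ val i t (f (Function.update (ω i t b) i b)) + φ i (Function.update (ω i t b) i b) :=
      ciInf_le (Set.finite_range _).bddBelow _
    have ht : val i t (f (Function.update (ω i t t) i t)) + φ i (Function.update (ω i t t) i t)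
        ≤ ⨅ x : ∀ j, T j,
            (val i t (f (Function.update x i t)) + φ i (Function.update x i t)) :=
      le_ciInf fun x => key t t x
    exact le_trans (hb.trans keyIC) ht
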